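/- Let A = {x ∈ S^d : δ(x,a) ≤ r} be a spherical cap centered at a ∈ S^d with radius r ∈ [0,π], and let u be a unit vector with u·O ≠ 0 and σ_u(a) ≠ a. Then the polarization of A is the spherical cap of the same radius centered at τ_u(a): S_u A = {x ∈ S^d : δ(x, τ_u(a)) ≤ r}, where τ_u(a) = a if δ(a,O) ≤ δ(σ_u(a),O) and τ_u(a) = σ_u(a) otherwise. -/

import Mathlib

open MeasureTheory Filter Real
open scoped ENNReal symmDiff BigOperators

noncomputable section

/-- Euclidean space `ℝ^{d+1}`. -/
abbrev Esp (d : ℕ) : Type := EuclideanSpace ℝ (Fin (d + 1))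

/-- The unit sphere `𝕊^d ⊆ ℝ^{d+1}`, as a set. -/
def sph (d : ℕ) : Set (Esp d) := Metric.sphere 0 1

/-- The north pole `O`. -/
def npole (d : ℕ) : Esp d := EuclideanSpace.single 0 1

/-- Geodesic distance `δ(x,y) = arccos (x ⬝ y)` on the sphere. -/
def gdist {d : ℕ} (x y : Esp d) : ℝ := Real.arccos (inner ℝ x y : ℝ)

/-- The reflection `σ_u (x) = x - 2 (u ⬝ x) u`. -/
def reflect {d : ℕ} (u x : Esp d) : Esp d := x - (2 * (inner ℝ u x : ℝ)) • u

/-- The polarization `S_u A` of a set `A` with respect to the reflection `σ_u`. -/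
def polarize {d : ℕ} (u : Esp d) (A : Set (Esp d)) : Set (Esp d) :=
  {x | if gdist x (npole d) ≤ gdist (reflect u x) (npole d)
       then x ∈ A ∨ reflect u x ∈ A
       else x ∈ A ∧ reflect u x ∈ A}

/-- `μ` is the uniform (rotation-invariant) Borel probability measure on `𝕊^d`:
it is a probability measure carried by the sphere that is invariant under every
linear isometry of `ℝ^{d+1}`. -/
def IsUniformSphere (d : ℕ) (μ : Measure (Esp d)) : Prop :=
  μ Set.univ = 1 ∧ μ (sph d)ᶜ = 0 ∧
    ∀ g : Esp d ≃ₗᵢ[ℝ] Esp d, μ.map ⇑g = μ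

/-- The polar cap of geodesic radius `r` centered at the north pole. -/
def cap (d : ℕ) (r : ℝ) : Set (Esp d) := {x ∈ sph d | gdist x (npole d) ≤ r}

/-- Iterated polarization: `polarizeSeq us A n = S_{u_{n-1}} ∘ ⋯ ∘ S_{u_0} A`. -/
def polarizeSeq {d : ℕ} (us : ℕ → Esp d) (A : Set (Esp d)) : ℕ → Set (Esp d)
  | 0 => A
  | n + 1 => polarize (us n) (polarizeSeq us A n)

/-- The compression `τ_u` associated with the reflection `σ_u`. -/
def compress {d : ℕ} (u x : Esp d) : Esp d :=
  if gdist x (npole d) ≤ gdist (reflect u x) (npole d) then x else reflect u x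

/-- Iterated compression: `compressSeq us x n = τ_{u_{n-1}} ∘ ⋯ ∘ τ_{u_0} x`. -/
def compressSeq {d : ℕ} (us : ℕ → Esp d) (x : Esp d) : ℕ → Esp d
  | 0 => x
  | n + 1 => compress (us n) (compressSeq us x n)

/- ### Auxiliary lemmas -/

lemma arccos_antitone : Antitone Real.arccos := by
  intro x y h
  unfold Real.arccos
  linarith [Real.monotone_arcsin h]

section aux
variable {d : ℕ}

lemma inner_reflect_right (u x y : Esp d) :
    (inner ℝ x (reflect u y) : ℝ) = (inner ℝ x y : ℝ) - 2 * (inner ℝ u x : ℝ) * (inner ℝ u y : ℝ) := by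
  simp only [reflect, inner_sub_right, real_inner_smul_right, real_inner_comm x u]
  ring

lemma inner_reflect_left (u x y : Esp d) :
    (inner ℝ (reflect u x) y : ℝ) = (inner ℝ x y : ℝ) - 2 * (inner ℝ u x : ℝ) * (inner ℝ u y : ℝ) := by
  rw [real_inner_comm, inner_reflect_right, real_inner_comm y x]
  ring

lemma inner_self_unit {u : Esp d} (hu : ‖u‖ = 1) : (inner ℝ u u : ℝ) = 1 := by
  rw [real_inner_self_eq_norm_mul_norm, hu]; norm_num

lemma inner_u_reflect {u : Esp d} (hu : ‖u‖ = 1) (x : Esp d) :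
    (inner ℝ u (reflect u x) : ℝ) = -(inner ℝ u x : ℝ) := by
  rw [inner_reflect_right, inner_self_unit hu]; ring

lemma reflect_reflect {u : Esp d} (hu : ‖u‖ = 1) (x : Esp d) :
    reflect u (reflect u x) = x := by
  have h1 : reflect u (reflect u x)
      = reflect u x - (2 * (inner ℝ u (reflect u x) : ℝ)) • u := rfl
  rw [h1, inner_u_reflect hu, reflect]
  module

lemma norm_reflect {u : Esp d} (hu : ‖u‖ = 1) (x : Esp d) :
    ‖reflect u x‖ = ‖x‖ := by
  have h : (inner ℝ (reflect u x) (reflect u x) : ℝ) = (inner ℝ x x : ℝ) := by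
    rw [inner_reflect_right, inner_reflect_left, inner_u_reflect hu]
    ring
  rw [real_inner_self_eq_norm_mul_norm, real_inner_self_eq_norm_mul_norm] at h
  nlinarith [norm_nonneg (reflect u x), norm_nonneg x]

lemma inner_mem_Icc {x y : Esp d} (hx : ‖x‖ = 1) (hy : ‖y‖ = 1) :
    (inner ℝ x y : ℝ) ∈ Set.Icc (-1 : ℝ) 1 := by
  have h := abs_real_inner_le_norm x y
  rw [hx, hy] at h
  rw [abs_le] at h
  exact ⟨by linarith [h.1], by linarith [h.2]⟩

lemma gdist_reflect_comm {u : Esp d} (x y : Esp d) :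
    gdist (reflect u x) y = gdist x (reflect u y) := by
  unfold gdist
  rw [inner_reflect_left, inner_reflect_right]

/-- Key monotonicity: if `x` and `b` are on the same side of the hyperplane, then
`b` is at least as close to `x` as its mirror image. -/
lemma gdist_le_gdist_reflect {u : Esp d} (hu : ‖u‖ = 1) {x b : Esp d}
    (hx : ‖x‖ = 1) (hb : ‖b‖ = 1)
    (h : 0 ≤ (inner ℝ u b : ℝ) * (inner ℝ u x : ℝ)) :
    gdist x b ≤ gdist x (reflect u b) := by
  unfold gdist
  apply arccos_antitone
  rw [inner_reflect_right]
  nlinarith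

/-- The polarization condition in terms of inner ℝ products. -/
lemma gdist_le_reflect_iff {u : Esp d} (hu : ‖u‖ = 1) {x y : Esp d}
    (hx : ‖x‖ = 1) (hy : ‖y‖ = 1) :
    gdist x y ≤ gdist (reflect u x) y ↔ 0 ≤ (inner ℝ u y : ℝ) * (inner ℝ u x : ℝ) := by
  unfold gdist
  rw [inner_reflect_left]
  rw [Real.strictAntiOn_arccos.le_iff_ge (inner_mem_Icc hx hy)]
  · constructor <;> intro h <;> nlinarith
  · have h1 := inner_mem_Icc (norm_reflect hu x ▸ hx : ‖reflect u x‖ = 1) hy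
    rw [inner_reflect_left] at h1
    exact h1

end aux

/-- Polarization maps the spherical cap of radius `r` centered at `a`
to the spherical cap of the same radius centered at the compression `τ_u(a)`. -/
theorem polarize_cap_eq_cap_compress {d : ℕ} (a : Esp d) (ha : a ∈ sph d)
    (u : Esp d) (hu : ‖u‖ = 1) (huO : (inner ℝ u (npole d) : ℝ) ≠ 0)
    (hfix : reflect u a ≠ a) (r : ℝ) (hr : r ∈ Set.Icc 0 π) :
    polarize u {x ∈ sph d | gdist x a ≤ r} =
      {x ∈ sph d | gdist x (compress u a) ≤ r} := by
  have ha' : ‖a‖ = 1 := mem_sphere_zero_iff_norm.mp ha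
  have hO : ‖npole d‖ = 1 := by
    simp [npole, EuclideanSpace.norm_single]
  have hc2 : (0:ℝ) < (inner ℝ u (npole d) : ℝ) * (inner ℝ u (npole d) : ℝ) :=
    mul_self_pos.mpr huO
  ext x
  simp only [polarize, Set.mem_setOf_eq, Set.mem_sep_iff]
  have hσs : reflect u x ∈ sph d ↔ x ∈ sph d := by
    simp [sph, mem_sphere_zero_iff_norm, norm_reflect hu]
  split_ifs with hP
  · -- case δ(x,O) ≤ δ(σx,O)
    by_cases hx : x ∈ sph d
    · have hx' : ‖x‖ = 1 := mem_sphere_zero_iff_norm.mp hx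
      have hcp : 0 ≤ (inner ℝ u (npole d) : ℝ) * (inner ℝ u x : ℝ) :=
        (gdist_le_reflect_iff hu hx' hO).mp hP
      simp only [hx, hσs, true_and]
      rw [gdist_reflect_comm]
      unfold compress
      split_ifs with hQ
      · -- compress u a = a
        have hca : 0 ≤ (inner ℝ u (npole d) : ℝ) * (inner ℝ u a : ℝ) :=
          (gdist_le_reflect_iff hu ha' hO).mp hQ
        have hqp : 0 ≤ (inner ℝ u a : ℝ) * (inner ℝ u x : ℝ) := by nlinarith
        have key := gdist_le_gdist_reflect hu hx' ha' hqp
        constructor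
        · rintro (h | h)
          · exact h
          · exact le_trans key h
        · exact Or.inl
      · -- compress u a = reflect u a
        have hca : (inner ℝ u (npole d) : ℝ) * (inner ℝ u a : ℝ) < 0 := by
          by_contra hcon
          exact hQ ((gdist_le_reflect_iff hu ha' hO).mpr (le_of_not_gt hcon))
        have hb' : ‖reflect u a‖ = 1 := by rw [norm_reflect hu]; exact ha'
        have hqp : 0 ≤ (inner ℝ u (reflect u a) : ℝ) * (inner ℝ u x : ℝ) := by
          rw [inner_u_reflect hu]; nlinarith
        have key := gdist_le_gdist_reflect hu hx' hb' hqp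
        rw [reflect_reflect hu] at key
        constructor
        · rintro (h | h)
          · exact le_trans key h
          · exact h
        · exact Or.inr
    · simp only [hx, hσs, false_and, false_or, false_iff]
  · -- case δ(x,O) > δ(σx,O)
    by_cases hx : x ∈ sph d
    · have hx' : ‖x‖ = 1 := mem_sphere_zero_iff_norm.mp hx
      have hcp : (inner ℝ u (npole d) : ℝ) * (inner ℝ u x : ℝ) < 0 := by
        by_contra hcon
        exact hP ((gdist_le_reflect_iff hu hx' hO).mpr (le_of_not_gt hcon))
      simp only [hx, hσs, true_and]
      rw [gdist_reflect_comm]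
      unfold compress
      split_ifs with hQ
      · -- compress u a = a
        have hca : 0 ≤ (inner ℝ u (npole d) : ℝ) * (inner ℝ u a : ℝ) :=
          (gdist_le_reflect_iff hu ha' hO).mp hQ
        have hb' : ‖reflect u a‖ = 1 := by rw [norm_reflect hu]; exact ha'
        have hqp : 0 ≤ (inner ℝ u (reflect u a) : ℝ) * (inner ℝ u x : ℝ) := by
          rw [inner_u_reflect hu]; nlinarith
        have key := gdist_le_gdist_reflect hu hx' hb' hqp
        rw [reflect_reflect hu] at key
        constructor
        · exact fun h => h.1
        · exact fun h => ⟨h, le_trans key h⟩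
      · -- compress u a = reflect u a
        have hca : (inner ℝ u (npole d) : ℝ) * (inner ℝ u a : ℝ) < 0 := by
          by_contra hcon
          exact hQ ((gdist_le_reflect_iff hu ha' hO).mpr (le_of_not_gt hcon))
        have hqp : 0 ≤ (inner ℝ u a : ℝ) * (inner ℝ u x : ℝ) := by nlinarith
        have key := gdist_le_gdist_reflect hu hx' ha' hqp
        constructor
        · exact fun h => h.2
        · exact fun h => ⟨le_trans key h, h⟩
    · simp only [hx, hσs, false_and, false_iff]
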